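/- Let K be an algebraically closed field and R = K[x1,…,x6]. Let I be the ideal of R generated by the monomials x1x3, x1x4, x1x5, x2x4, x2x6, x3x5, x3x6, x4x6. Then I equals the radical of the ideal generated by the four polynomials x1x4, x3x6, x1x3 + x1x5 + x2x4, x2x6 + x3x5 + x4x6. -/

import Mathlib

open MvPolynomial

section Aux

variable {K : Type*} [Field K]

/-- Substitution sending all variables except `i, j` to `0`. -/
private noncomputable def sub2 (K : Type*) [Field K] (i j : Fin 6) :
    MvPolynomial (Fin 6) K →ₐ[K] MvPolynomial (Fin 6) K :=
  aeval (fun k : Fin 6 => if k = i ∨ k = j then X k else 0)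

private lemma coeff_sub2 (i j : Fin 6) (m : Fin 6 →₀ ℕ)
    (hm : ∀ k, m k ≠ 0 → k = i ∨ k = j) (f : MvPolynomial (Fin 6) K) :
    coeff m (sub2 K i j f) = coeff m f := by
  induction f using MvPolynomial.induction_on' with
  | monomial u a =>
    by_cases hu : ∀ k ∈ u.support, k = i ∨ k = j
    · have : sub2 K i j (monomial u a) = monomial u a := by
        rw [sub2, aeval_monomial, monomial_eq]
        congr 1
        refine Finsupp.prod_congr fun k hk => ?_
        rw [if_pos (hu k hk)]
      rw [this]
    · push_neg at hu
      obtain ⟨k, hk, hki⟩ := hu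
      have hki' : ¬(k = i ∨ k = j) := not_or.mpr hki
      have h0 : sub2 K i j (monomial u a) = 0 := by
        rw [sub2, aeval_monomial]
        have : (u.prod fun k n => (if k = i ∨ k = j then (X k : MvPolynomial (Fin 6) K) else 0) ^ n) = 0 := by
          refine Finset.prod_eq_zero hk ?_
          show (if k = i ∨ k = j then (X k : MvPolynomial (Fin 6) K) else 0) ^ u k = 0
          rw [if_neg hki', zero_pow (Finsupp.mem_support_iff.mp hk)]
        rw [this, mul_zero]
      rw [h0, coeff_zero, coeff_monomial, if_neg]
      rintro rfl
      exact hki' (hm k (Finsupp.mem_support_iff.mp hk))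
  | add p q hp hq =>
    rw [map_add, coeff_add, coeff_add, hp, hq]

private lemma monomial_mem_of_edge (I : Ideal (MvPolynomial (Fin 6) K)) (i j : Fin 6)
    (hne : i ≠ j) (hij : X i * X j ∈ I) (m : Fin 6 →₀ ℕ) (hi : m i ≠ 0) (hj : m j ≠ 0)
    (c : K) : monomial m c ∈ I := by
  have hsum : m = Finsupp.single i 1
      + (Finsupp.single j 1 + (m - Finsupp.single i 1 - Finsupp.single j 1)) := by
    ext k
    rcases eq_or_ne i k with rfl | hik
    · simp only [Finsupp.add_apply, Finsupp.tsub_apply, Finsupp.single_apply]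
      simp only [if_pos rfl, if_neg hne.symm, if_true, eq_self_iff_true]
      omega
    · rcases eq_or_ne j k with rfl | hjk
      · simp only [Finsupp.add_apply, Finsupp.tsub_apply, Finsupp.single_apply]
        simp only [if_pos rfl, if_neg hik, if_true, eq_self_iff_true]
        omega
      · simp only [Finsupp.add_apply, Finsupp.tsub_apply, Finsupp.single_apply,
          if_neg hik, if_neg hjk]
        omega
  have key : monomial m c = (X i * X j)
      * monomial (m - Finsupp.single i 1 - Finsupp.single j 1) c := by
    conv_lhs => rw [hsum]
    rw [monomial_single_add, monomial_single_add, pow_one, pow_one, mul_assoc]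
  rw [key]
  exact Ideal.mul_mem_right _ _ hij

private lemma comb : ∀ b : Fin 6 → Bool,
    ¬(b 0 ∧ b 2) → ¬(b 0 ∧ b 3) → ¬(b 0 ∧ b 4) → ¬(b 1 ∧ b 3) →
    ¬(b 1 ∧ b 5) → ¬(b 2 ∧ b 4) → ¬(b 2 ∧ b 5) → ¬(b 3 ∧ b 5) →
    (∀ k, b k → k = 0 ∨ k = 1) ∨ (∀ k, b k → k = 0 ∨ k = 5) ∨
    (∀ k, b k → k = 1 ∨ k = 2) ∨ (∀ k, b k → k = 1 ∨ k = 4) ∨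
    (∀ k, b k → k = 2 ∨ k = 3) ∨ (∀ k, b k → k = 3 ∨ k = 4) ∨
    (∀ k, b k → k = 4 ∨ k = 5) := by decide

end Aux

set_option maxHeartbeats 2000000 in
/-- **Example 8 (Barile).** Let `K` be algebraically closed and `R = K[x₁,…,x₆]`.
The ideal `I = (x₁x₃, x₁x₄, x₁x₅, x₂x₄, x₂x₆, x₃x₅, x₃x₆, x₄x₆)` satisfies
`I = √(x₁x₄, x₃x₆, x₁x₃ + x₁x₅ + x₂x₄, x₂x₆ + x₃x₅ + x₄x₆)`.
(The variables `x₁,…,x₆` are `X 0, …, X 5`.) -/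
theorem example8_eq_radical_four (K : Type*) [Field K] [IsAlgClosed K] :
    Ideal.span ({X 0 * X 2, X 0 * X 3, X 0 * X 4, X 1 * X 3, X 1 * X 5,
        X 2 * X 4, X 2 * X 5, X 3 * X 5} : Set (MvPolynomial (Fin 6) K)) =
      (Ideal.span ({X 0 * X 3, X 2 * X 5,
        X 0 * X 2 + X 0 * X 4 + X 1 * X 3,
        X 1 * X 5 + X 2 * X 4 + X 3 * X 5} : Set (MvPolynomial (Fin 6) K))).radical := by
  have mem4 : ∀ A B C D : MvPolynomial (Fin 6) K,
      A * (X 0 * X 3) + B * (X 2 * X 5)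
        + C * (X 0 * X 2 + X 0 * X 4 + X 1 * X 3)
        + D * (X 1 * X 5 + X 2 * X 4 + X 3 * X 5) ∈ Ideal.span ({X 0 * X 3, X 2 * X 5,
          X 0 * X 2 + X 0 * X 4 + X 1 * X 3,
          X 1 * X 5 + X 2 * X 4 + X 3 * X 5} : Set (MvPolynomial (Fin 6) K)) := by
    intro A B C D
    refine Ideal.add_mem _ (Ideal.add_mem _ (Ideal.add_mem _ ?_ ?_) ?_) ?_ <;>
      exact Ideal.mul_mem_left _ _ (Ideal.subset_span (by simp))
  apply le_antisymm
  · -- I ≤ √J : explicit power certificates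
    rw [Ideal.span_le]
    rintro x hx
    simp only [Set.mem_insert_iff, Set.mem_singleton_iff] at hx
    rw [SetLike.mem_coe, Ideal.mem_radical_iff]
    -- abbreviations
    rcases hx with rfl | rfl | rfl | rfl | rfl | rfl | rfl | rfl
    · -- a = X0*X2 : a⁴ ∈ J
      refine ⟨4, ?_⟩
      have := mem4 (-(((X 0*X 2)^2 - X 0^2*(X 2*X 4)) * (X 1*X 2)))
        (-(X 0^4*(X 1*X 4) + X 0^4*(X 3*X 4)))
        (((X 0*X 2)^2 - X 0^2*(X 2*X 4)) * (X 0*X 2))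
        (X 0^4*(X 2*X 4))
      convert this using 1; ring
    · exact ⟨1, by simpa using mem4 1 0 0 0⟩
    · -- c = X0*X4 : c⁴ ∈ J
      refine ⟨4, ?_⟩
      have := mem4 (-(((X 0*X 4)^2 - X 0^2*(X 2*X 4)) * (X 1*X 4)))
        (-(X 0^4*(X 1*X 4) + X 0^4*(X 3*X 4)))
        (((X 0*X 4)^2 - X 0^2*(X 2*X 4)) * (X 0*X 4))
        (X 0^4*(X 2*X 4))
      convert this using 1; ring
    · -- d = X1*X3 : d² ∈ J
      refine ⟨2, ?_⟩
      have := mem4 (-(X 1*X 2) - (X 1*X 4)) 0 (X 1*X 3) 0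
      convert this using 1; ring
    · -- e = X1*X5 : e⁴ ∈ J
      refine ⟨4, ?_⟩
      have := mem4 (-(X 5^4*(X 1*X 2) + X 5^4*(X 1*X 4)))
        (-(((X 1*X 5)^2 - X 5^2*(X 1*X 3)) * (X 1*X 4)))
        (X 5^4*(X 1*X 3))
        (((X 1*X 5)^2 - X 5^2*(X 1*X 3)) * (X 1*X 5))
      convert this using 1; ring
    · -- f = X2*X4 : f² ∈ J
      refine ⟨2, ?_⟩
      have := mem4 0 (-(X 1*X 4) - (X 3*X 4)) 0 (X 2*X 4)
      convert this using 1; ring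
    · exact ⟨1, by simpa using mem4 0 1 0 0⟩
    · -- h = X3*X5 : h⁴ ∈ J
      refine ⟨4, ?_⟩
      have := mem4 (-(X 5^4*(X 1*X 2) + X 5^4*(X 1*X 4)))
        (-(((X 3*X 5)^2 - X 5^2*(X 1*X 3)) * (X 3*X 4)))
        (X 5^4*(X 1*X 3))
        (((X 3*X 5)^2 - X 5^2*(X 1*X 3)) * (X 3*X 5))
      convert this using 1; ring
  · -- √J ≤ I
    intro f hf
    obtain ⟨n, hn⟩ := Ideal.mem_radical_iff.mp hf
    -- the substitution maps kill J, hence kill f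
    have vanish : ∀ i j : Fin 6,
        sub2 K i j (X 0 * X 3) = 0 → sub2 K i j (X 2 * X 5) = 0 →
        sub2 K i j (X 0 * X 2 + X 0 * X 4 + X 1 * X 3) = 0 →
        sub2 K i j (X 1 * X 5 + X 2 * X 4 + X 3 * X 5) = 0 →
        sub2 K i j f = 0 := by
      intro i j h1 h2 h3 h4
      have hker : Ideal.span ({X 0 * X 3, X 2 * X 5,
          X 0 * X 2 + X 0 * X 4 + X 1 * X 3,
          X 1 * X 5 + X 2 * X 4 + X 3 * X 5} : Set (MvPolynomial (Fin 6) K))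
          ≤ RingHom.ker (sub2 K i j).toRingHom := by
        rw [Ideal.span_le]
        rintro x hx
        simp only [Set.mem_insert_iff, Set.mem_singleton_iff] at hx
        rcases hx with rfl | rfl | rfl | rfl <;>
          simp only [SetLike.mem_coe, RingHom.mem_ker, AlgHom.toRingHom_eq_coe,
            RingHom.coe_coe] <;> assumption
      have h0 : (sub2 K i j f) ^ n = 0 := by
        have := hker hn
        rwa [RingHom.mem_ker, AlgHom.toRingHom_eq_coe, RingHom.coe_coe, map_pow] at this
      rcases Nat.eq_zero_or_pos n with rfl | hpos
      · simp at h0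
      · exact pow_eq_zero_iff hpos.ne' |>.mp h0
    have gen_zero : ∀ (i j a b : Fin 6), (¬(a = i ∨ a = j) ∨ ¬(b = i ∨ b = j)) →
        sub2 K i j (X a * X b) = 0 := by
      intro i j a b hab
      rw [sub2, map_mul, aeval_X, aeval_X]
      rcases hab with h | h
      · rw [if_neg h, zero_mul]
      · rw [if_neg h, mul_zero]
    -- write f as a sum of monomials
    rw [← support_sum_monomial_coeff f]
    apply Ideal.sum_mem
    intro m hm
    by_cases hedge : (m 0 ≠ 0 ∧ m 2 ≠ 0) ∨ (m 0 ≠ 0 ∧ m 3 ≠ 0) ∨ (m 0 ≠ 0 ∧ m 4 ≠ 0) ∨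
        (m 1 ≠ 0 ∧ m 3 ≠ 0) ∨ (m 1 ≠ 0 ∧ m 5 ≠ 0) ∨ (m 2 ≠ 0 ∧ m 4 ≠ 0) ∨
        (m 2 ≠ 0 ∧ m 5 ≠ 0) ∨ (m 3 ≠ 0 ∧ m 5 ≠ 0)
    · rcases hedge with ⟨h1, h2⟩ | ⟨h1, h2⟩ | ⟨h1, h2⟩ | ⟨h1, h2⟩ | ⟨h1, h2⟩ | ⟨h1, h2⟩ |
        ⟨h1, h2⟩ | ⟨h1, h2⟩
      · refine monomial_mem_of_edge _ 0 2 (by decide) ?_ m h1 h2 _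
        exact Ideal.subset_span (by simp)
      · refine monomial_mem_of_edge _ 0 3 (by decide) ?_ m h1 h2 _
        exact Ideal.subset_span (by simp)
      · refine monomial_mem_of_edge _ 0 4 (by decide) ?_ m h1 h2 _
        exact Ideal.subset_span (by simp)
      · refine monomial_mem_of_edge _ 1 3 (by decide) ?_ m h1 h2 _
        exact Ideal.subset_span (by simp)
      · refine monomial_mem_of_edge _ 1 5 (by decide) ?_ m h1 h2 _
        exact Ideal.subset_span (by simp)
      · refine monomial_mem_of_edge _ 2 4 (by decide) ?_ m h1 h2 _
        exact Ideal.subset_span (by simp)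
      · refine monomial_mem_of_edge _ 2 5 (by decide) ?_ m h1 h2 _
        exact Ideal.subset_span (by simp)
      · refine monomial_mem_of_edge _ 3 5 (by decide) ?_ m h1 h2 _
        exact Ideal.subset_span (by simp)
    · push_neg at hedge
      obtain ⟨e1, e2, e3, e4, e5, e6, e7, e8⟩ := hedge
      have hb := comb (fun k => m k != 0)
      simp only [bne_iff_ne, ne_eq, not_and, decide_eq_true_eq] at hb
      have hcases := hb (by tauto) (by tauto) (by tauto) (by tauto) (by tauto)
        (by tauto) (by tauto) (by tauto)
      have hz : coeff m f = 0 := by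
        rcases hcases with h | h | h | h | h | h | h
        · rw [← coeff_sub2 0 1 m h f,
            vanish 0 1 (gen_zero _ _ _ _ (by decide)) (gen_zero _ _ _ _ (by decide))
              (by rw [map_add, map_add, gen_zero _ _ _ _ (by decide),
                gen_zero _ _ _ _ (by decide), gen_zero _ _ _ _ (by decide)]; ring)
              (by rw [map_add, map_add, gen_zero _ _ _ _ (by decide),
                gen_zero _ _ _ _ (by decide), gen_zero _ _ _ _ (by decide)]; ring),
            coeff_zero]
        · rw [← coeff_sub2 0 5 m h f,
            vanish 0 5 (gen_zero _ _ _ _ (by decide)) (gen_zero _ _ _ _ (by decide))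
              (by rw [map_add, map_add, gen_zero _ _ _ _ (by decide),
                gen_zero _ _ _ _ (by decide), gen_zero _ _ _ _ (by decide)]; ring)
              (by rw [map_add, map_add, gen_zero _ _ _ _ (by decide),
                gen_zero _ _ _ _ (by decide), gen_zero _ _ _ _ (by decide)]; ring),
            coeff_zero]
        · rw [← coeff_sub2 1 2 m h f,
            vanish 1 2 (gen_zero _ _ _ _ (by decide)) (gen_zero _ _ _ _ (by decide))
              (by rw [map_add, map_add, gen_zero _ _ _ _ (by decide),
                gen_zero _ _ _ _ (by decide), gen_zero _ _ _ _ (by decide)]; ring)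
              (by rw [map_add, map_add, gen_zero _ _ _ _ (by decide),
                gen_zero _ _ _ _ (by decide), gen_zero _ _ _ _ (by decide)]; ring),
            coeff_zero]
        · rw [← coeff_sub2 1 4 m h f,
            vanish 1 4 (gen_zero _ _ _ _ (by decide)) (gen_zero _ _ _ _ (by decide))
              (by rw [map_add, map_add, gen_zero _ _ _ _ (by decide),
                gen_zero _ _ _ _ (by decide), gen_zero _ _ _ _ (by decide)]; ring)
              (by rw [map_add, map_add, gen_zero _ _ _ _ (by decide),
                gen_zero _ _ _ _ (by decide), gen_zero _ _ _ _ (by decide)]; ring),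
            coeff_zero]
        · rw [← coeff_sub2 2 3 m h f,
            vanish 2 3 (gen_zero _ _ _ _ (by decide)) (gen_zero _ _ _ _ (by decide))
              (by rw [map_add, map_add, gen_zero _ _ _ _ (by decide),
                gen_zero _ _ _ _ (by decide), gen_zero _ _ _ _ (by decide)]; ring)
              (by rw [map_add, map_add, gen_zero _ _ _ _ (by decide),
                gen_zero _ _ _ _ (by decide), gen_zero _ _ _ _ (by decide)]; ring),
            coeff_zero]
        · rw [← coeff_sub2 3 4 m h f,
            vanish 3 4 (gen_zero _ _ _ _ (by decide)) (gen_zero _ _ _ _ (by decide))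
              (by rw [map_add, map_add, gen_zero _ _ _ _ (by decide),
                gen_zero _ _ _ _ (by decide), gen_zero _ _ _ _ (by decide)]; ring)
              (by rw [map_add, map_add, gen_zero _ _ _ _ (by decide),
                gen_zero _ _ _ _ (by decide), gen_zero _ _ _ _ (by decide)]; ring),
            coeff_zero]
        · rw [← coeff_sub2 4 5 m h f,
            vanish 4 5 (gen_zero _ _ _ _ (by decide)) (gen_zero _ _ _ _ (by decide))
              (by rw [map_add, map_add, gen_zero _ _ _ _ (by decide),
                gen_zero _ _ _ _ (by decide), gen_zero _ _ _ _ (by decide)]; ring)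
              (by rw [map_add, map_add, gen_zero _ _ _ _ (by decide),
                gen_zero _ _ _ _ (by decide), gen_zero _ _ _ _ (by decide)]; ring),
            coeff_zero]
      rw [hz, monomial_zero]
      exact Ideal.zero_mem _
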